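/- The module Θ(λ, α, β, γ) over the affine-Virasoro algebra of type A₁ is simple if and only if 2β is not a nonnegative integer. -/

import Mathlib

open MvPolynomial

abbrev R2 : Type := MvPolynomial (Fin 2) ℂ

/-- Substitution `g(s,t) ↦ g(s - u, t + v)`. -/
noncomputable def sh (u v : ℂ) : R2 →ₐ[ℂ] R2 := aeval ![X 0 - C u, X 1 + C v]

/-- Action of `e_i` in `Θ(λ,α,β,γ)`. -/
noncomputable def thE (lam a b : ℂ) (i : ℤ) (g : R2) : R2 :=
  C (lam ^ i * a) * (C 2⁻¹ * X 1 + C b) * sh (i : ℂ) (-2) g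

/-- Action of `f_i` in `Θ(λ,α,β,γ)`. -/
noncomputable def thF (lam a b : ℂ) (i : ℤ) (g : R2) : R2 :=
  C (-(lam ^ i / a)) * (C 2⁻¹ * X 1 - C b) * sh (i : ℂ) 2 g

/-- Action of `h_i`. -/
noncomputable def opH (lam : ℂ) (i : ℤ) (g : R2) : R2 :=
  C (lam ^ i) * X 1 * sh (i : ℂ) 0 g

/-- Action of `d_i`. -/
noncomputable def opD (lam c : ℂ) (i : ℤ) (g : R2) : R2 :=
  C (lam ^ i) * (X 0 + C ((i : ℂ) * c)) * sh (i : ℂ) 0 g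
/-- `Polynomial ℂ → R2`, `X ↦ X 1`. -/
noncomputable def toR2 : Polynomial ℂ →ₐ[ℂ] R2 := Polynomial.aeval (X 1)

lemma sh_X0 (u v : ℂ) : sh u v (X 0) = X 0 - C u := by
  simp [sh]

lemma sh_X1 (u v : ℂ) : sh u v (X 1) = X 1 + C v := by
  simp [sh]

lemma sh_zero (g : R2) : sh 0 0 g = g := by
  have : (sh 0 0 : R2 →ₐ[ℂ] R2) = AlgHom.id ℂ R2 := by
    apply MvPolynomial.algHom_ext
    intro i
    fin_cases i <;> simp [sh]
  rw [this]; rfl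

lemma sh_toR2 (u v : ℂ) (P : Polynomial ℂ) :
    sh u v (toR2 P) = toR2 (P.comp (Polynomial.X + Polynomial.C v)) := by
  show sh u v (Polynomial.aeval (X 1) P) = _
  rw [← Polynomial.aeval_algHom_apply (sh u v) (X 1) P, sh_X1]
  show _ = Polynomial.aeval (X 1) _
  rw [Polynomial.aeval_comp]
  congr 1
  simp
noncomputable def ii : MvPolynomial (Fin 1) ℂ ≃ₐ[ℂ] Polynomial ℂ :=
  (MvPolynomial.finSuccEquiv ℂ 0).trans
    (Polynomial.mapAlgEquiv (MvPolynomial.isEmptyAlgEquiv ℂ (Fin 0)))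

noncomputable def EE : R2 ≃ₐ[ℂ] Polynomial (Polynomial ℂ) :=
  (MvPolynomial.finSuccEquiv ℂ 1).trans (Polynomial.mapAlgEquiv ii)

lemma EE_X0 : EE (X 0) = Polynomial.X := by
  simp [EE, MvPolynomial.finSuccEquiv_X_zero, Polynomial.mapAlgEquiv]

lemma EE_X1 : EE (X 1) = Polynomial.C Polynomial.X := by
  have h1 : (1 : Fin 2) = Fin.succ 0 := rfl
  rw [EE, AlgEquiv.trans_apply, h1, MvPolynomial.finSuccEquiv_X_succ]
  simp [Polynomial.mapAlgEquiv, ii, MvPolynomial.finSuccEquiv_X_zero]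

lemma EE_toR2 (P : Polynomial ℂ) : EE (toR2 P) = Polynomial.C P := by
  show EE (Polynomial.aeval (X 1) P) = _
  rw [← Polynomial.aeval_algHom_apply EE (X 1) P, EE_X1]
  have : (Polynomial.C : Polynomial ℂ →+* Polynomial (Polynomial ℂ)) Polynomial.X
      = Polynomial.CAlgHom (R := ℂ) Polynomial.X := rfl
  rw [this, Polynomial.aeval_algHom_apply Polynomial.CAlgHom Polynomial.X P,
    Polynomial.aeval_X_left_apply]
  rfl

lemma EE_sh (k : ℂ) (g : R2) :
    EE (sh k 0 g) = (EE g).comp (Polynomial.X - Polynomial.C (Polynomial.C k)) := by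
  have key : (EE.toAlgHom.comp (sh k 0)) =
      ((Polynomial.aeval (Polynomial.X - Polynomial.C (Polynomial.C k)) :
        Polynomial (Polynomial ℂ) →ₐ[Polynomial ℂ] Polynomial (Polynomial ℂ)).restrictScalars
        ℂ).comp EE.toAlgHom := by
    apply MvPolynomial.algHom_ext
    intro i
    fin_cases i
    · simp [sh_X0, EE_X0, map_sub, show (C k : R2) = algebraMap ℂ R2 k from rfl,
        AlgEquiv.commutes, Polynomial.algebraMap_apply, Polynomial.algebraMap_eq]
    · simp [sh_X1, EE_X1]
  have := congrFun (congrArg DFunLike.coe key) g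
  simpa [Polynomial.comp_eq_aeval] using this
lemma EE_ne_zero {g : R2} (hg : g ≠ 0) : EE g ≠ 0 := fun h =>
  hg (by simpa using EE.injective (h.trans (map_zero EE).symm))

lemma exists_poly (W : Submodule ℂ R2)
    (hmul : ∀ q g : R2, g ∈ W → q * g ∈ W)
    (hshift : ∀ i : ℤ, ∀ g ∈ W, X 1 * sh (i : ℂ) 0 g ∈ W)
    (g : R2) (hg : g ∈ W) (hg0 : g ≠ 0) :
    ∃ P : Polynomial ℂ, P ≠ 0 ∧ toR2 P ∈ W := by
  suffices H : ∀ n : ℕ, ∀ g ∈ W, g ≠ 0 → (EE g).natDegree = n →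
      ∃ P : Polynomial ℂ, P ≠ 0 ∧ toR2 P ∈ W from H _ g hg hg0 rfl
  intro n
  induction n using Nat.strong_induction_on with
  | _ n IH =>
  intro g hg hg0 hn
  have hQ0 : EE g ≠ 0 := EE_ne_zero hg0
  rcases Nat.eq_zero_or_pos n with h0 | hpos
  · -- degree 0 in X 0 : g is a polynomial in X 1
    subst h0
    refine ⟨(EE g).coeff 0, ?_, ?_⟩
    · intro h
      apply hQ0
      rw [Polynomial.eq_C_of_natDegree_eq_zero hn, h, map_zero]
    · have : toR2 ((EE g).coeff 0) = g := by
        apply EE.injective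
        rw [EE_toR2, ← Polynomial.eq_C_of_natDegree_eq_zero hn]
      rwa [this]
  · set Q := EE g with hQdef
    set δ : Polynomial (Polynomial ℂ) :=
      Q.comp (Polynomial.X - Polynomial.C (Polynomial.C 1)) - Q with hδdef
    have hdeg : (Q.comp (Polynomial.X - Polynomial.C (Polynomial.C 1))).natDegree
        = Q.natDegree := by
      rw [Polynomial.natDegree_comp, Polynomial.natDegree_X_sub_C, mul_one]
    by_cases hδ : δ = 0
    · exfalso
      have hcomp1 : Q.comp (Polynomial.X - Polynomial.C (Polynomial.C 1)) = Q := by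
        have := sub_eq_zero.mp hδ
        exact this
      have hcompm : ∀ m : ℕ,
          Q.comp (Polynomial.X - Polynomial.C (Polynomial.C (m : ℂ))) = Q := by
        intro m
        induction m with
        | zero => simp
        | succ m ih =>
          have : (Polynomial.X - Polynomial.C (Polynomial.C ((m : ℂ)))).comp
              (Polynomial.X - Polynomial.C (Polynomial.C (1 : ℂ)))
              = Polynomial.X - Polynomial.C (Polynomial.C ((m + 1 : ℕ) : ℂ)) := by
            simp [Polynomial.sub_comp]
            push_cast
            ring
          rw [← this, ← Polynomial.comp_assoc, ih, hcomp1]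
      have heval : ∀ m : ℕ, Q.eval (-(Polynomial.C (m : ℂ))) = Q.eval 0 := by
        intro m
        conv_rhs => rw [← hcompm m]
        rw [Polynomial.eval_comp]
        simp
      have hinf : {x | Polynomial.IsRoot (Q - Polynomial.C (Q.eval 0)) x}.Infinite := by
        apply Set.infinite_of_injective_forall_mem
          (f := fun m : ℕ => -(Polynomial.C (m : ℂ) : Polynomial ℂ))
        · intro m₁ m₂ h
          simp only [neg_inj, Polynomial.C_inj] at h
          exact_mod_cast h
        · intro m
          simp only [Set.mem_setOf_eq, Polynomial.IsRoot.def, Polynomial.eval_sub,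
            Polynomial.eval_C, heval m, sub_self]
      have : Q - Polynomial.C (Q.eval 0) = 0 :=
        Polynomial.eq_zero_of_infinite_isRoot _ hinf
      have hQC : Q = Polynomial.C (Q.eval 0) := sub_eq_zero.mp this
      rw [hQC] at hn
      simp [Polynomial.natDegree_C] at hn
      omega
    · set g₁ : R2 := X 1 * sh ((1:ℤ) : ℂ) 0 g - X 1 * g with hg₁def
      have hg₁W : g₁ ∈ W := sub_mem (hshift 1 g hg) (hmul (X 1) g hg)
      have hEg₁ : EE g₁ = Polynomial.C Polynomial.X * δ := by
        rw [hg₁def, map_sub, map_mul, map_mul, EE_X1, EE_sh, hδdef]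
        push_cast
        ring
      have hg₁0 : g₁ ≠ 0 := by
        intro h
        rw [h, map_zero] at hEg₁
        exact (mul_ne_zero (Polynomial.C_ne_zero.mpr Polynomial.X_ne_zero) hδ) hEg₁.symm
      have hcompne : Q.comp (Polynomial.X - Polynomial.C (Polynomial.C 1)) ≠ 0 := by
        intro h
        rw [h] at hdeg
        simp only [Polynomial.natDegree_zero] at hdeg
        rw [hn] at hdeg  -- natDegree Q = n? hn : Q.natDegree = n
        omega
      have hlc : (Q.comp (Polynomial.X - Polynomial.C (Polynomial.C 1))).leadingCoeff
          = Q.leadingCoeff := by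
        rw [Polynomial.leadingCoeff_comp (by rw [Polynomial.natDegree_X_sub_C]; omega),
          (Polynomial.monic_X_sub_C _).leadingCoeff, one_pow, mul_one]
      have hdd : (Q.comp (Polynomial.X - Polynomial.C (Polynomial.C 1))).degree = Q.degree := by
        rw [Polynomial.degree_eq_natDegree hcompne, Polynomial.degree_eq_natDegree hQ0, hdeg]
      have hdegδ : δ.degree < Q.degree := by
        rw [hδdef, ← hdd]
        exact Polynomial.degree_sub_lt hdd hcompne hlc
      have hlt : (EE g₁).natDegree < n := by
        rw [hEg₁, Polynomial.natDegree_mul (Polynomial.C_ne_zero.mpr Polynomial.X_ne_zero) hδ]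
        simp only [Polynomial.natDegree_C, zero_add]
        calc δ.natDegree < Q.natDegree := Polynomial.natDegree_lt_natDegree hδ hdegδ
        _ = n := hn
      exact IH _ hlt g₁ hg₁W hg₁0 rfl
local notation "pX" => Polynomial.X
local notation "pC" => Polynomial.C

open Polynomial in
lemma roots_comp_shift (q : Polynomial ℂ) (hq : q ≠ 0) (a : ℂ) :
    (q.comp (pX - pC a)).roots = q.roots.map (· + a) := by
  have hsplit : Multiset.card q.roots = q.natDegree :=
    (Polynomial.splits_iff_card_roots).mp (IsAlgClosed.splits q)
  have hfact := Polynomial.C_leadingCoeff_mul_prod_multiset_X_sub_C hsplit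
  have hlc : q.leadingCoeff ≠ 0 := leadingCoeff_ne_zero.mpr hq
  conv_lhs => rw [← hfact]
  rw [mul_comp, C_comp, comp_eq_aeval, map_multiset_prod, Multiset.map_map]
  have hx : ∀ ρ : ℂ, (Polynomial.aeval (pX - pC a)) (pX - pC ρ) = pX - pC (ρ + a) := by
    intro ρ
    simp only [map_sub, Polynomial.aeval_X, Polynomial.aeval_C]
    rw [Polynomial.algebraMap_eq, map_add]
    ring
  have hfun : (⇑(Polynomial.aeval (pX - pC a)) ∘ fun x : ℂ => pX - pC x)
      = fun x : ℂ => pX - pC (x + a) := funext hx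
  rw [hfun]
  rw [show (q.roots.map fun x => pX - pC (x + a)) = ((q.roots.map (· + a)).map fun x => pX - pC x)
      by rw [Multiset.map_map]; rfl]
  rw [roots_C_mul _ hlc, roots_multiset_prod_X_sub_C]

lemma sum_roots_map_add (s : Multiset ℂ) (a : ℂ) :
    (s.map (· + a)).sum = s.sum + (Multiset.card s : ℂ) * a := by
  induction s using Multiset.induction_on with
  | empty => simp
  | cons x s ih =>
    simp only [Multiset.map_cons, Multiset.sum_cons, ih, Multiset.card_cons]
    push_cast
    ring

open Polynomial in
lemma roots_X_add_C' (r : ℂ) : (pX + pC r).roots = {-r} := by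
  rw [show (pX + pC r : Polynomial ℂ) = pX - pC (-r) by rw [map_neg, sub_neg_eq_add],
    roots_X_sub_C]

open Polynomial in
lemma comp_shift_lc (q : Polynomial ℂ) (s : ℂ) :
    (q.comp (pX - pC s)).leadingCoeff = q.leadingCoeff := by
  rcases eq_or_ne q 0 with rfl | hq
  · simp
  rw [leadingCoeff_comp (by rw [natDegree_X_sub_C]; exact one_ne_zero),
    (monic_X_sub_C s).leadingCoeff, one_pow, mul_one]

open Polynomial in
lemma comp_shift_ne_zero (q : Polynomial ℂ) (hq : q ≠ 0) (s : ℂ) :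
    q.comp (pX - pC s) ≠ 0 := by
  intro h0
  apply hq
  rw [← leadingCoeff_eq_zero, ← comp_shift_lc q s, h0, leadingCoeff_zero]

open Polynomial in
lemma linear_factor (q v : Polynomial ℂ) (hq : q ≠ 0) (r s : ℂ)
    (h : (pX + pC r) * q.comp (pX - pC s) = q * v) :
    v = pX + pC (r - q.natDegree * s) := by
  have hsplit : Multiset.card q.roots = q.natDegree :=
    (Polynomial.splits_iff_card_roots).mp (IsAlgClosed.splits q)
  have hXr : (pX + pC r : Polynomial ℂ) ≠ 0 := fun h0 => by
    have h1 := natDegree_X_add_C r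
    rw [h0] at h1
    simp at h1
  have hcomp0 : q.comp (pX - pC s) ≠ 0 := comp_shift_ne_zero q hq s
  have hL0 : (pX + pC r) * q.comp (pX - pC s) ≠ 0 := mul_ne_zero hXr hcomp0
  have hR0 : q * v ≠ 0 := h ▸ hL0
  have hv0 : v ≠ 0 := by
    intro h0
    rw [h0, mul_zero] at h
    exact hL0 h
  have hdc : (q.comp (pX - pC s)).natDegree = q.natDegree := by
    rw [natDegree_comp, natDegree_X_sub_C, mul_one]
  have hvdeg : v.natDegree = 1 := by
    have := congrArg natDegree h
    rw [natDegree_mul hXr hcomp0, natDegree_mul hq hv0, natDegree_X_add_C, hdc] at this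
    omega
  have hlcq : q.leadingCoeff ≠ 0 := leadingCoeff_ne_zero.mpr hq
  have hvlc : v.leadingCoeff = 1 := by
    have hl := congrArg leadingCoeff h
    rw [leadingCoeff_mul, leadingCoeff_mul, leadingCoeff_X_add_C, comp_shift_lc, one_mul] at hl
    rcases mul_right_eq_self₀.mp hl.symm with h' | h'
    · exact h'
    · exact absurd h' hlcq
  have hveq : v = pX + pC (v.coeff 0) := by
    have h1 := eq_X_add_C_of_natDegree_le_one (le_of_eq hvdeg)
    have hc1 : v.coeff 1 = 1 := by
      have h2 := coeff_natDegree (p := v)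
      rw [hvdeg] at h2
      rw [h2, hvlc]
    rwa [hc1, map_one, one_mul] at h1
  have hroots := congrArg (fun p => p.roots.sum) h
  rw [roots_mul hL0, roots_mul hR0, roots_X_add_C', roots_comp_shift q hq s,
    hveq, roots_X_add_C'] at hroots
  rw [Multiset.sum_add, Multiset.sum_add, Multiset.sum_singleton, Multiset.sum_singleton,
    sum_roots_map_add, hsplit] at hroots
  have hc0 : v.coeff 0 = r - q.natDegree * s := by linear_combination hroots
  rw [hveq, hc0]
open Polynomial in
lemma one_mem_ideal (b : ℂ) (hb : ¬∃ n : ℕ, (n : ℂ) = 2 * b)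
    (I : Ideal (Polynomial ℂ))
    (hA : ∀ P ∈ I, (pX + pC (2*b)) * P.comp (pX - pC 2) ∈ I)
    (hB : ∀ P ∈ I, (pX - pC (2*b)) * P.comp (pX + pC 2) ∈ I)
    (P0 : Polynomial ℂ) (hP0 : P0 ∈ I) (hP00 : P0 ≠ 0) :
    (1 : Polynomial ℂ) ∈ I := by
  haveI : I.IsPrincipal := IsPrincipalIdealRing.principal I
  set q := Submodule.IsPrincipal.generator I with hqdef
  have hspan : Ideal.span {q} = I := Ideal.span_singleton_generator I
  have hq0 : q ≠ 0 := by
    intro h0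
    apply hP00
    have hh := hP0
    rw [← hspan, Ideal.mem_span_singleton, h0] at hh
    exact zero_dvd_iff.mp hh
  suffices hd : q.natDegree = 0 by
    have hc : q.coeff 0 ≠ 0 := fun h =>
      hq0 (by rw [Polynomial.eq_C_of_natDegree_eq_zero hd, h, map_zero])
    rw [← hspan, Ideal.mem_span_singleton, Polynomial.eq_C_of_natDegree_eq_zero hd]
    exact isUnit_iff_dvd_one.mp (Polynomial.isUnit_C.mpr hc.isUnit)
  by_contra hd
  have hqmem : q ∈ I := by rw [← hspan]; exact Ideal.subset_span rfl
  obtain ⟨u, hu⟩ : q ∣ (pX + pC (2*b)) * q.comp (pX - pC 2) := by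
    rw [← Ideal.mem_span_singleton, hspan]; exact hA q hqmem
  obtain ⟨w, hw⟩ : q ∣ (pX - pC (2*b)) * q.comp (pX + pC 2) := by
    rw [← Ideal.mem_span_singleton, hspan]; exact hB q hqmem
  have hu' := linear_factor q u hq0 (2*b) 2 hu
  have hw0 : (pX - pC (2*b)) * q.comp (pX + pC 2)
      = (pX + pC (-(2*b))) * q.comp (pX - pC (-2)) := by
    rw [map_neg, map_neg, sub_neg_eq_add, ← sub_eq_add_neg]
  have hw' := linear_factor q w hq0 (-(2*b)) (-2) (by rw [← hw0]; exact hw)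
  set D : ℂ := (q.natDegree : ℂ) with hDdef
  rw [hu'] at hu
  rw [hw'] at hw
  have hQc0 : q.comp (pX + pC 2) ≠ 0 := by
    have h2 := comp_shift_ne_zero q hq0 (-2)
    rwa [map_neg, sub_neg_eq_add] at h2
  have hqq : (q.comp (pX - pC 2)).comp (pX + pC 2) = q := by
    rw [Polynomial.comp_assoc]
    simp [Polynomial.sub_comp]
  have hu2 := congrArg (fun p => p.comp (pX + pC 2)) hu
  simp only [Polynomial.mul_comp, Polynomial.add_comp, Polynomial.X_comp, Polynomial.C_comp,
    hqq] at hu2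
  have key : (q * q.comp (pX + pC 2)) * ((pX + pC 2 + pC (2*b)) * (pX - pC (2*b)))
      = (q * q.comp (pX + pC 2)) *
        ((pX + pC 2 + pC (2*b - D*2)) * (pX + pC (-(2*b) - D*(-2)))) := by
    linear_combination ((pX - pC (2*b)) * q.comp (pX + pC 2)) * hu2
      + ((pX + pC 2 + pC (2*b - D*2)) * q.comp (pX + pC 2)) * hw
  have hK0 : q * q.comp (pX + pC 2) ≠ 0 := mul_ne_zero hq0 hQc0
  have hquad := mul_left_cancel₀ hK0 key
  have heval := congrArg (Polynomial.eval 0) hquad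
  simp only [Polynomial.eval_mul, Polynomial.eval_add, Polynomial.eval_sub, Polynomial.eval_X,
    Polynomial.eval_C, zero_add] at heval
  have hD0 : D ≠ 0 := Nat.cast_ne_zero.mpr hd
  have hbD : 2 * b = D - 1 := by
    have h4 : (4 * D) * (1 + 2*b - D) = 0 := by linear_combination -heval
    rcases mul_eq_zero.mp h4 with h5 | h5
    · exfalso
      apply hD0
      rcases mul_eq_zero.mp h5 with h6 | h6
      · norm_num at h6
      · exact h6
    · linear_combination h5
  apply hb
  refine ⟨q.natDegree - 1, ?_⟩
  rw [Nat.cast_sub (Nat.one_le_iff_ne_zero.mpr hd), hbD]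
  norm_num [hDdef]
lemma sh_C (u v x : ℂ) : sh u v (C x) = C x := by
  rw [show (C x : R2) = algebraMap ℂ R2 x from rfl, AlgHom.commutes]

lemma opH_zero (lam : ℂ) (g : R2) : opH lam 0 g = X 1 * g := by
  rw [opH]
  norm_num [sh_zero]

lemma opD_zero (lam c : ℂ) (g : R2) : opD lam c 0 g = X 0 * g := by
  rw [opD]
  norm_num [sh_zero]

lemma W_mul (W : Submodule ℂ R2) (hX0 : ∀ g ∈ W, X 0 * g ∈ W)
    (hX1 : ∀ g ∈ W, X 1 * g ∈ W) : ∀ q g : R2, g ∈ W → q * g ∈ W := by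
  intro q
  induction q using MvPolynomial.induction_on with
  | C x => intro g hg; rw [← MvPolynomial.smul_eq_C_mul]; exact W.smul_mem x hg
  | add p q hp hq => intro g hg; rw [add_mul]; exact add_mem (hp g hg) (hq g hg)
  | mul_X p i hp =>
    intro g hg
    have h1 : p * g ∈ W := hp g hg
    have h2 : p * X i * g = X i * (p * g) := by ring
    rw [h2]
    fin_cases i
    · exact hX0 _ h1
    · exact hX1 _ h1


lemma toR2_X : toR2 Polynomial.X = X 1 := by simp [toR2]

lemma toR2_C (x : ℂ) : toR2 (pC x) = C x := by simp [toR2, MvPolynomial.algebraMap_eq]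

lemma toR2_Acomp (b : ℂ) (P : Polynomial ℂ) :
    toR2 ((pX + pC (2*b)) * P.comp (pX - pC 2))
      = C 2 * ((C 2⁻¹ * X 1 + C b) * sh 0 (-2) (toR2 P)) := by
  rw [map_mul, map_add, toR2_X, toR2_C]
  rw [show (pX - pC 2 : Polynomial ℂ) = pX + pC (-2) by rw [map_neg, ← sub_eq_add_neg]]
  rw [← sh_toR2 0 (-2) P]
  have e1 : (X 1 + C (2*b) : R2) = C 2 * (C 2⁻¹ * X 1 + C b) := by
    rw [mul_add, ← mul_assoc, ← map_mul, ← map_mul]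
    norm_num
  rw [e1]
  ring

lemma toR2_Bcomp (b : ℂ) (P : Polynomial ℂ) :
    toR2 ((pX - pC (2*b)) * P.comp (pX + pC 2))
      = C 2 * ((C 2⁻¹ * X 1 - C b) * sh 0 2 (toR2 P)) := by
  rw [map_mul, map_sub, toR2_X, toR2_C]
  rw [← sh_toR2 0 2 P]
  have e1 : (X 1 - C (2*b) : R2) = C 2 * (C 2⁻¹ * X 1 - C b) := by
    rw [mul_sub, ← mul_assoc, ← map_mul, ← map_mul]
    norm_num
  rw [e1]
  ring

lemma simple_of (lam a b c : ℂ) (hlam : lam ≠ 0) (ha : a ≠ 0)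
    (hb : ¬∃ n : ℕ, (n : ℂ) = 2 * b) (W : Submodule ℂ R2)
    (hE : ∀ i : ℤ, ∀ g ∈ W, thE lam a b i g ∈ W)
    (hF : ∀ i : ℤ, ∀ g ∈ W, thF lam a b i g ∈ W)
    (hH : ∀ i : ℤ, ∀ g ∈ W, opH lam i g ∈ W)
    (hD : ∀ i : ℤ, ∀ g ∈ W, opD lam c i g ∈ W) :
    W = ⊥ ∨ W = ⊤ := by
  rcases eq_or_ne W ⊥ with h | h
  · left; exact h
  right
  obtain ⟨g0, hg0W, hg00⟩ := W.ne_bot_iff.mp h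
  have hX1m : ∀ g ∈ W, X 1 * g ∈ W := fun g hg => by
    have h1 := hH 0 g hg; rwa [opH_zero] at h1
  have hX0m : ∀ g ∈ W, X 0 * g ∈ W := fun g hg => by
    have h1 := hD 0 g hg; rwa [opD_zero] at h1
  have hmul := W_mul W hX0m hX1m
  have hshift : ∀ i : ℤ, ∀ g ∈ W, X 1 * sh (i : ℂ) 0 g ∈ W := by
    intro i g hg
    have h2 := W.smul_mem ((lam ^ i)⁻¹) (hH i g hg)
    rw [opH, MvPolynomial.smul_eq_C_mul] at h2
    have e : C ((lam ^ i)⁻¹) * (C (lam ^ i) * X 1 * sh (i : ℂ) 0 g)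
        = C ((lam ^ i)⁻¹ * lam ^ i) * (X 1 * sh (i : ℂ) 0 g) := by
      simp only [map_mul]; ring
    rw [e, inv_mul_cancel₀ (zpow_ne_zero i hlam), map_one, one_mul] at h2
    exact h2
  obtain ⟨P0, hP00, hP0W⟩ := exists_poly W hmul hshift g0 hg0W hg00
  have hE0 : ∀ g ∈ W, (C 2⁻¹ * X 1 + C b) * sh 0 (-2) g ∈ W := by
    intro g hg
    have h2 := W.smul_mem a⁻¹ (hE 0 g hg)
    rw [thE, MvPolynomial.smul_eq_C_mul] at h2
    have e : C a⁻¹ * (C (lam ^ (0:ℤ) * a) * (C 2⁻¹ * X 1 + C b) * sh ((0:ℤ) : ℂ) (-2) g)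
        = C (a⁻¹ * (lam ^ (0:ℤ) * a)) * ((C 2⁻¹ * X 1 + C b) * sh ((0:ℤ) : ℂ) (-2) g) := by
      simp only [map_mul]; ring
    rw [e] at h2
    have e2 : a⁻¹ * (lam ^ (0:ℤ) * a) = 1 := by
      rw [zpow_zero, one_mul, inv_mul_cancel₀ ha]
    rw [e2, map_one, one_mul] at h2
    simpa using h2
  have hF0 : ∀ g ∈ W, (C 2⁻¹ * X 1 - C b) * sh 0 2 g ∈ W := by
    intro g hg
    have h2 := W.smul_mem (-a) (hF 0 g hg)
    rw [thF, MvPolynomial.smul_eq_C_mul] at h2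
    have e : C (-a) * (C (-(lam ^ (0:ℤ) / a)) * (C 2⁻¹ * X 1 - C b) * sh ((0:ℤ) : ℂ) 2 g)
        = C (-a * -(lam ^ (0:ℤ) / a)) * ((C 2⁻¹ * X 1 - C b) * sh ((0:ℤ) : ℂ) 2 g) := by
      simp only [map_mul]; ring
    rw [e] at h2
    have e2 : -a * -(lam ^ (0:ℤ) / a) = 1 := by
      rw [zpow_zero]
      field_simp
    rw [e2, map_one, one_mul] at h2
    simpa using h2
  -- the ideal of one-variable members
  let WI : Ideal R2 :=
    { carrier := W
      add_mem' := fun h1 h2 => add_mem h1 h2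
      zero_mem' := W.zero_mem
      smul_mem' := fun q g hg => by simpa [smul_eq_mul] using hmul q g hg }
  let I : Ideal (Polynomial ℂ) := Ideal.comap (toR2 : Polynomial ℂ →ₐ[ℂ] R2).toRingHom WI
  have hIW : ∀ P : Polynomial ℂ, P ∈ I ↔ toR2 P ∈ W := fun P => Iff.rfl
  have hA : ∀ P ∈ I, (pX + pC (2*b)) * P.comp (pX - pC 2) ∈ I := by
    intro P hP
    rw [hIW] at hP ⊢
    have h2 := W.smul_mem 2 (hE0 (toR2 P) hP)
    rw [MvPolynomial.smul_eq_C_mul, ← toR2_Acomp b P] at h2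
    exact h2
  have hB' : ∀ P ∈ I, (pX - pC (2*b)) * P.comp (pX + pC 2) ∈ I := by
    intro P hP
    rw [hIW] at hP ⊢
    have h2 := W.smul_mem 2 (hF0 (toR2 P) hP)
    rw [MvPolynomial.smul_eq_C_mul, ← toR2_Bcomp b P] at h2
    exact h2
  have h1 : (1 : Polynomial ℂ) ∈ I := one_mem_ideal b hb I hA hB' P0 ((hIW P0).mpr hP0W) hP00
  have h1W : (1 : R2) ∈ W := by
    have h2 := (hIW 1).mp h1
    rwa [map_one] at h2
  exact Submodule.eq_top_iff'.mpr fun g => by simpa using hmul g 1 h1W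
lemma sh_factor (u v x : ℂ) :
    sh u v (C 2⁻¹ * X 1 + C x) = C 2⁻¹ * X 1 + C (x + 2⁻¹ * v) := by
  rw [map_add, map_mul, sh_C, sh_X1, sh_C, mul_add, ← map_mul, add_assoc, ← map_add]
  congr 1
  ring

lemma not_simple (lam a b c : ℂ) (n : ℕ) (hn : (n : ℂ) = 2 * b)
    (hsimp : ∀ W : Submodule ℂ R2,
      (∀ i : ℤ, ∀ g ∈ W, thE lam a b i g ∈ W) →
      (∀ i : ℤ, ∀ g ∈ W, thF lam a b i g ∈ W) →
      (∀ i : ℤ, ∀ g ∈ W, opH lam i g ∈ W) →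
      (∀ i : ℤ, ∀ g ∈ W, opD lam c i g ∈ W) →
      W = ⊥ ∨ W = ⊤) : False := by
  classical
  set f : ℕ → R2 := fun k => C 2⁻¹ * X 1 + C (b - k) with hf
  set P : R2 := ∏ k ∈ Finset.range (n+1), f k with hP
  set W : Submodule ℂ R2 := Submodule.restrictScalars ℂ (Ideal.span {P} : Ideal R2) with hW
  have hmem : ∀ g : R2, g ∈ W ↔ P ∣ g := fun g => by
    rw [hW, Submodule.restrictScalars_mem]
    exact Ideal.mem_span_singleton
  have hshf : ∀ (u : ℂ) (k : ℕ), sh u 0 (f k) = f k := by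
    intro u k
    rw [hf]
    simp only
    rw [sh_factor]
    norm_num
  have hshP0 : ∀ u : ℂ, sh u 0 P = P := by
    intro u
    rw [hP, map_prod]
    exact Finset.prod_congr rfl fun k _ => hshf u k
  have key1 : ∀ u : ℂ, (C 2⁻¹ * X 1 + C b) * sh u (-2) P = P * f (n+1) := by
    intro u
    rw [hP, map_prod]
    have e1 : ∀ k ∈ Finset.range (n+1), sh u (-2) (f k) = f (k+1) := by
      intro k _
      rw [hf]
      simp only
      rw [sh_factor]
      congr 1
      push_cast
      ring
    rw [Finset.prod_congr rfl e1]
    have e2 : (C 2⁻¹ * X 1 + C b : R2) = f 0 := by rw [hf]; norm_num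
    rw [e2, mul_comm (f 0), ← Finset.prod_range_succ' f (n+1), Finset.prod_range_succ]
  have key2 : ∀ u : ℂ,
      (C 2⁻¹ * X 1 - C b) * sh u 2 P = P * (C 2⁻¹ * X 1 + C (b+1)) := by
    intro u
    rw [hP, map_prod]
    have e1 : ∀ k ∈ Finset.range (n+1),
        sh u 2 (f k) = (fun k : ℕ => C 2⁻¹ * X 1 + C (b + 1 - k)) k := by
      intro k _
      rw [hf]
      simp only
      rw [sh_factor]
      congr 1
      ring
    rw [Finset.prod_congr rfl e1]
    rw [Finset.prod_range_succ' (fun k : ℕ => C 2⁻¹ * X 1 + C (b + 1 - k)) n]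
    have e2 : ∀ i ∈ Finset.range n,
        (fun k : ℕ => C 2⁻¹ * X 1 + C (b + 1 - k) : ℕ → R2) (i+1) = f i := by
      intro i _
      rw [hf]
      simp only
      congr 1
      push_cast
      ring
    rw [Finset.prod_congr rfl e2]
    have e3 : (C 2⁻¹ * X 1 - C b : R2) = f n := by
      rw [hf]
      simp only
      have hbn : b - (n:ℂ) = -b := by linear_combination -hn
      rw [hbn, map_neg, ← sub_eq_add_neg]
    rw [e3]
    have e4 : (b + 1 - (0:ℕ) : ℂ) = b + 1 := by norm_num
    rw [e4]
    rw [show f n * ((∏ i ∈ Finset.range n, f i) * (C 2⁻¹ * X 1 + C (b+1)))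
        = ((∏ i ∈ Finset.range n, f i) * f n) * (C 2⁻¹ * X 1 + C (b+1)) by ring,
      ← Finset.prod_range_succ f n]
  have hinvE : ∀ i : ℤ, ∀ g ∈ W, thE lam a b i g ∈ W := by
    intro i g hg
    rw [hmem] at hg ⊢
    obtain ⟨h, rfl⟩ := hg
    refine ⟨C (lam ^ i * a) * f (n+1) * sh (i:ℂ) (-2) h, ?_⟩
    have e : thE lam a b i (P * h)
        = C (lam ^ i * a) * ((C 2⁻¹ * X 1 + C b) * sh (i:ℂ) (-2) P) * sh (i:ℂ) (-2) h := by
      simp only [thE, map_mul]; ring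
    rw [e, key1]; ring
  have hinvF : ∀ i : ℤ, ∀ g ∈ W, thF lam a b i g ∈ W := by
    intro i g hg
    rw [hmem] at hg ⊢
    obtain ⟨h, rfl⟩ := hg
    refine ⟨C (-(lam ^ i / a)) * (C 2⁻¹ * X 1 + C (b+1)) * sh (i:ℂ) 2 h, ?_⟩
    have e : thF lam a b i (P * h)
        = C (-(lam ^ i / a)) * ((C 2⁻¹ * X 1 - C b) * sh (i:ℂ) 2 P) * sh (i:ℂ) 2 h := by
      simp only [thF, map_mul]; ring
    rw [e, key2]; ring
  have hinvH : ∀ i : ℤ, ∀ g ∈ W, opH lam i g ∈ W := by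
    intro i g hg
    rw [hmem] at hg ⊢
    obtain ⟨h, rfl⟩ := hg
    refine ⟨C (lam ^ i) * X 1 * sh (i:ℂ) 0 h, ?_⟩
    have e : opH lam i (P * h)
        = C (lam ^ i) * X 1 * (sh (i:ℂ) 0 P * sh (i:ℂ) 0 h) := by
      simp only [opH, map_mul]
    rw [e, hshP0]; ring
  have hinvD : ∀ i : ℤ, ∀ g ∈ W, opD lam c i g ∈ W := by
    intro i g hg
    rw [hmem] at hg ⊢
    obtain ⟨h, rfl⟩ := hg
    refine ⟨C (lam ^ i) * (X 0 + C (i * c)) * sh (i:ℂ) 0 h, ?_⟩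
    have e : opD lam c i (P * h)
        = C (lam ^ i) * (X 0 + C (i * c)) * (sh (i:ℂ) 0 P * sh (i:ℂ) 0 h) := by
      simp only [opD, map_mul]
    rw [e, hshP0]; ring
  have him : b.im = 0 := by
    have h1 := congrArg Complex.im hn
    simp only [Complex.natCast_im, Complex.mul_im] at h1
    have h2 : (2:ℂ).im = 0 := by norm_num
    have h3 : (2:ℂ).re = 2 := by norm_num
    rw [h2, h3] at h1
    linarith
  have hPne : P ≠ 0 := by
    intro h0
    have hev := congrArg (MvPolynomial.eval (fun _ : Fin 2 => Complex.I)) h0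
    rw [hP, map_prod, map_zero] at hev
    have hne : ∀ k ∈ Finset.range (n+1),
        MvPolynomial.eval (fun _ : Fin 2 => Complex.I) (f k) ≠ 0 := by
      intro k _
      rw [hf]
      simp only [map_add, map_mul, MvPolynomial.eval_C, MvPolynomial.eval_X]
      intro hz
      have h1 := congrArg Complex.im hz
      simp only [Complex.add_im, Complex.mul_im, Complex.I_im, Complex.I_re, Complex.sub_im,
        Complex.natCast_im, Complex.zero_im] at h1
      have h4 : ((2:ℂ)⁻¹).im = 0 := by norm_num
      have h5 : ((2:ℂ)⁻¹).re = 2⁻¹ := by norm_num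
      rw [h4, h5, him] at h1
      norm_num at h1
    exact (Finset.prod_ne_zero_iff.mpr hne) hev
  rcases hsimp W hinvE hinvF hinvH hinvD with hbot | htop
  · apply hPne
    have hPW : P ∈ W := (hmem P).mpr dvd_rfl
    rw [hbot] at hPW
    simpa using hPW
  · have h1 : (1:R2) ∈ W := by rw [htop]; trivial
    obtain ⟨h, h1eq⟩ := (hmem 1).mp h1
    have hev := congrArg (MvPolynomial.eval (fun _ : Fin 2 => (-2)*b)) h1eq
    rw [map_one, map_mul, hP, map_prod] at hev
    have hz : MvPolynomial.eval (fun _ : Fin 2 => (-2)*b) (f 0) = 0 := by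
      rw [hf]
      simp only [map_add, map_mul, MvPolynomial.eval_C, MvPolynomial.eval_X, Nat.cast_zero,
        sub_zero]
      ring
    rw [Finset.prod_eq_zero (Finset.mem_range.mpr (by omega)) hz, zero_mul] at hev
    exact one_ne_zero hev
/-- Θ(λ,α,β,γ) is simple iff 2β is not a nonnegative integer. Simplicity is expressed as:
every ℂ-subspace invariant under all the operators e_i, f_i, h_i, d_i (and C, which acts
as zero) is either ⊥ or the whole module. -/
theorem stmt9 (lam a : ℂ) (hlam : lam ≠ 0) (ha : a ≠ 0) (b c : ℂ) :
    (∀ W : Submodule ℂ R2,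
      (∀ i : ℤ, ∀ g ∈ W, thE lam a b i g ∈ W) →
      (∀ i : ℤ, ∀ g ∈ W, thF lam a b i g ∈ W) →
      (∀ i : ℤ, ∀ g ∈ W, opH lam i g ∈ W) →
      (∀ i : ℤ, ∀ g ∈ W, opD lam c i g ∈ W) →
      W = ⊥ ∨ W = ⊤)
    ↔ ¬ ∃ n : ℕ, (n : ℂ) = 2 * b := by
  constructor
  · intro hsimp
    rintro ⟨n, hn⟩
    exact not_simple lam a b c n hn hsimp
  · intro hb W hE hF hH hD
    exact simple_of lam a b c hlam ha hb W hE hF hH hD
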